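/- Let ι be a finite type, let ρ : (ι → ℝ) → ℝ be a vector of weights, and let S be a nonempty subset of ℤ≥0^ι. Then ρ attains a minimum on S: there exists σ₀ ∈ S such that ρ(σ₀) ≤ ρ(σ) for all σ ∈ S. -/
import Mathlib


/-- A vector of weights on `ℝ^ι`: a linear map `ρ : (ι → ℝ) → ℝ` with `ρ(σ) > 0`
for every nonzero `σ` with all coordinates nonnegative. -/
def IsWeightVector {ι : Type*} (ρ : (ι → ℝ) →ₗ[ℝ] ℝ) : Prop :=
  ∀ σ : ι → ℝ, (∀ i, 0 ≤ σ i) → σ ≠ 0 → 0 < ρ σ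

/-- A vector of weights attains a minimum on every nonempty subset
`S ⊆ ℤ≥0^ι`. -/
theorem weight_attains_min_on_nonneg_lattice {ι : Type*} [Fintype ι]
    (ρ : (ι → ℝ) →ₗ[ℝ] ℝ) (hρ : IsWeightVector ρ)
    (S : Set (ι → ℕ)) (hS : S.Nonempty) :
    ∃ σ₀ ∈ S, ∀ σ ∈ S, ρ (fun i => (σ₀ i : ℝ)) ≤ ρ (fun i => (σ i : ℝ)) := by
  classical
  set w : ι → ℝ := fun i => ρ (Pi.single i 1) with hw
  have hwpos : ∀ i, 0 < w i := by
    intro i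
    apply hρ
    · intro j
      rcases eq_or_ne j i with rfl | h
      · simp
      · simp [Pi.single_apply, h]
    · intro h
      have := congrFun h i
      simp at this
  have hρeq : ∀ σ : ι → ℕ, ρ (fun i => (σ i : ℝ)) = ∑ i, (σ i : ℝ) * w i := by
    intro σ
    have : (fun i => (σ i : ℝ)) = ∑ i, (σ i : ℝ) • (Pi.single i 1 : ι → ℝ) := by
      rw [pi_eq_sum_univ (fun i => (σ i : ℝ))]
      congr 1
      ext i j
      simp [Pi.single_apply, eq_comm]
    rw [this, map_sum]
    simp [hw]
  have hterm : ∀ (σ : ι → ℕ) (i : ι), (σ i : ℝ) * w i ≤ ρ (fun i => (σ i : ℝ)) := by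
    intro σ i
    rw [hρeq]
    apply Finset.single_le_sum (f := fun j => (σ j : ℝ) * w j)
    · intro j _
      exact mul_nonneg (Nat.cast_nonneg _) (hwpos j).le
    · exact Finset.mem_univ i
  obtain ⟨σ₁, hσ₁⟩ := hS
  set T : Set (ι → ℕ) := {σ ∈ S | ρ (fun i => (σ i : ℝ)) ≤ ρ (fun i => (σ₁ i : ℝ))} with hT
  have hTfin : T.Finite := by
    have hsub : T ⊆ Set.pi Set.univ
        (fun i => Set.Iic (⌈ρ (fun i => (σ₁ i : ℝ)) / w i⌉₊)) := by
      intro σ hσ i _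
      have h1 : (σ i : ℝ) * w i ≤ ρ (fun i => (σ₁ i : ℝ)) :=
        (hterm σ i).trans hσ.2
      have h2 : (σ i : ℝ) ≤ ρ (fun i => (σ₁ i : ℝ)) / w i :=
        (le_div_iff₀ (hwpos i)).mpr h1
      have : (σ i : ℝ) ≤ (⌈ρ (fun i => (σ₁ i : ℝ)) / w i⌉₊ : ℝ) :=
        h2.trans (Nat.le_ceil _)
      exact_mod_cast this
    exact Set.Finite.subset (Set.Finite.pi (fun i => Set.finite_Iic _)) hsub
  have hTne : T.Nonempty := ⟨σ₁, hσ₁, le_refl _⟩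
  obtain ⟨σ₀, hσ₀T, hmin⟩ :=
    Set.exists_min_image T (fun σ => ρ (fun i => (σ i : ℝ))) hTfin hTne
  refine ⟨σ₀, hσ₀T.1, ?_⟩
  intro σ hσ
  by_cases h : ρ (fun i => (σ i : ℝ)) ≤ ρ (fun i => (σ₁ i : ℝ))
  · exact hmin σ ⟨hσ, h⟩
  · exact (hmin σ₁ ⟨hσ₁, le_refl _⟩).trans (le_of_not_ge h)
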